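/- Let d ≥ 0 and i ≥ 1 be integers. The family of polynomials t^j P_{d−2j,i}(t) for 0 ≤ j ≤ ⌊(d+1)/2⌋, viewed in ℚ[t], is linearly independent over ℚ, and its ℚ-linear span equals the set of polynomials h ∈ ℚ[t] of degree at most d + 1 satisfying t^{d+1} h(1/t) = h(t) (equivalently, the reversal of h with respect to degree d + 1 equals h). -/
import Mathlib


open Polynomial Finset

/-- The polynomial `P_{d,i}(t)`, here with rational coefficients: `P_{d,i} = 1` for `d < 0`
(in particular `P_{-1,i} = 1`), and for `d ≥ 0`,
`P_{d,i} = (1 + t + ⋯ + t^i)^q (1 + t + ⋯ + t^r)` where `q ≥ 0` and `1 ≤ r ≤ i` are the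
unique integers with `d + 1 = q·i + r` (for `i ≥ 1`, `q = ⌊d/i⌋` and `r = (d mod i) + 1`). -/
noncomputable def Ppoly (d : ℤ) (i : ℕ) : ℚ[X] :=
  if d < 0 then 1
  else (∑ k ∈ range (i + 1), X ^ k) ^ (d.toNat / i) *
    (∑ k ∈ range (d.toNat % i + 2), X ^ k)

lemma geom_coeff (n m : ℕ) : (∑ k ∈ range n, (X:ℚ[X])^k).coeff m = if m < n then 1 else 0 := by
  rw [finset_sum_coeff]
  simp [coeff_X_pow, Finset.sum_ite_eq, Finset.mem_range]

lemma geom_monic (n : ℕ) : (∑ k ∈ range (n+1), (X:ℚ[X])^k).Monic :=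
  monic_geom_sum_X (Nat.succ_ne_zero n)

lemma geom_natDegree (n : ℕ) : (∑ k ∈ range (n+1), (X:ℚ[X])^k).natDegree = n := by
  apply le_antisymm
  · apply natDegree_sum_le_of_forall_le
    intro k hk
    simpa [natDegree_X_pow] using Nat.lt_succ_iff.mp (Finset.mem_range.mp hk)
  · apply le_natDegree_of_ne_zero
    rw [geom_coeff]; simp

lemma geom_reflect (n : ℕ) :
    reflect n (∑ k ∈ range (n+1), (X:ℚ[X])^k) = ∑ k ∈ range (n+1), (X:ℚ[X])^k := by
  ext m
  rw [coeff_reflect, geom_coeff, geom_coeff]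
  rcases le_or_gt m n with h | h
  · rw [revAt_le h]; simp [Nat.lt_succ_iff, h, Nat.sub_le]
  · rw [revAt_eq_self_of_lt (by omega)]

lemma Ppoly_ofNat (n : ℕ) (i : ℕ) :
    Ppoly (n : ℤ) i = (∑ k ∈ range (i+1), (X:ℚ[X])^k) ^ (n / i) *
      (∑ k ∈ range (n % i + 2), X ^ k) := by
  simp [Ppoly]

lemma Ppoly_neg {d : ℤ} (hd : d < 0) (i : ℕ) : Ppoly d i = 1 := if_pos hd

lemma Ppoly_monic (n : ℕ) (i : ℕ) : (Ppoly (n : ℤ) i).Monic := by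
  rw [Ppoly_ofNat]
  exact ((geom_monic i).pow _).mul (geom_monic _)

lemma Ppoly_natDegree (n : ℕ) {i : ℕ} (hi : 1 ≤ i) :
    (Ppoly (n : ℤ) i).natDegree = n + 1 := by
  rw [Ppoly_ofNat, Monic.natDegree_mul ((geom_monic i).pow _) (geom_monic _),
    (geom_monic i).natDegree_pow, geom_natDegree, geom_natDegree]
  have := Nat.div_add_mod n i
  have hc : n / i * i = i * (n / i) := Nat.mul_comm _ _
  omega

lemma geom_pow_reflect (i q : ℕ) :
    reflect (q * i) ((∑ k ∈ range (i+1), (X:ℚ[X])^k) ^ q)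
      = (∑ k ∈ range (i+1), (X:ℚ[X])^k) ^ q := by
  induction q with
  | zero => simp
  | succ q ih =>
    have h1 : ((∑ k ∈ range (i+1), (X:ℚ[X])^k) ^ q).natDegree ≤ q * i := by
      rw [(geom_monic i).natDegree_pow, geom_natDegree]
    have h2 : (∑ k ∈ range (i+1), (X:ℚ[X])^k).natDegree ≤ i := (geom_natDegree i).le
    rw [pow_succ, show (q+1)*i = q*i + i by ring, reflect_mul _ _ h1 h2, ih, geom_reflect]

lemma Ppoly_reflect (n : ℕ) {i : ℕ} (hi : 1 ≤ i) :
    reflect (n + 1) (Ppoly (n : ℤ) i) = Ppoly (n : ℤ) i := by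
  have h1 : ((∑ k ∈ range (i+1), (X:ℚ[X])^k) ^ (n / i)).natDegree ≤ (n / i) * i := by
    rw [(geom_monic i).natDegree_pow, geom_natDegree]
  have h2 : (∑ k ∈ range (n % i + 2), (X:ℚ[X])^k).natDegree ≤ n % i + 1 :=
    (geom_natDegree _).le
  have := Nat.div_add_mod n i
  have hc : n / i * i = i * (n / i) := Nat.mul_comm _ _
  rw [Ppoly_ofNat, show n + 1 = (n / i) * i + (n % i + 1) by omega,
    reflect_mul _ _ h1 h2, geom_pow_reflect, geom_reflect]

lemma fj_facts (d i j : ℕ) (hi : 1 ≤ i) (hj : 2 * j ≤ d + 1) :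
    ((X:ℚ[X]) ^ j * Ppoly ((d:ℤ) - 2 * j) i).Monic ∧
    ((X:ℚ[X]) ^ j * Ppoly ((d:ℤ) - 2 * j) i).natDegree = d + 1 - j ∧
    reflect (d + 1) ((X:ℚ[X]) ^ j * Ppoly ((d:ℤ) - 2 * j) i)
      = (X:ℚ[X]) ^ j * Ppoly ((d:ℤ) - 2 * j) i := by
  rcases eq_or_lt_of_le hj with he | hlt
  · -- 2*j = d+1, so d - 2j = -1
    have h1 : (d:ℤ) - 2 * j = -1 := by omega
    rw [h1, Ppoly_neg (by norm_num) i, mul_one]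
    refine ⟨monic_X_pow j, by rw [natDegree_X_pow]; omega, ?_⟩
    rw [reflect_monomial, revAt_le (by omega)]
    congr 1
    omega
  · -- 2*j ≤ d
    have h2j : 2 * j ≤ d := by omega
    have h1 : (d:ℤ) - 2 * j = ((d - 2 * j : ℕ) : ℤ) := by push_cast; omega
    rw [h1]
    have hm := Ppoly_monic (d - 2 * j) i
    have hd := Ppoly_natDegree (d - 2 * j) (i := i) hi
    refine ⟨(monic_X_pow j).mul hm, ?_, ?_⟩
    · rw [(monic_X_pow j).natDegree_mul hm, natDegree_X_pow, hd]; omega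
    · rw [show d + 1 = 2 * j + (d - 2 * j + 1) by omega,
        reflect_mul _ _ (by simp; omega) (by rw [hd]),
        reflect_monomial, revAt_le (by omega), show 2 * j - j = j by omega,
        Ppoly_reflect _ hi]

lemma fam_li (d i : ℕ) (hi : 1 ≤ i) :
    LinearIndependent ℚ
      (fun j : Fin ((d + 1) / 2 + 1) =>
        (X : ℚ[X]) ^ (j : ℕ) * Ppoly ((d : ℤ) - 2 * (j : ℕ)) i) := by
  have hb : ∀ j : Fin ((d + 1) / 2 + 1), 2 * (j : ℕ) ≤ d + 1 := by
    intro j; have := j.isLt; omega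
  rw [Fintype.linearIndependent_iff]
  intro g hg
  suffices h : ∀ n : ℕ, ∀ j : Fin ((d + 1) / 2 + 1), (j : ℕ) = n → g j = 0 by
    intro j; exact h j j rfl
  intro n
  induction n using Nat.strong_induction_on with
  | _ n ihn =>
    intro j hjn
    have hcoeff := congrArg (fun p : ℚ[X] => p.coeff (d + 1 - (j : ℕ))) hg
    simp only [finset_sum_coeff, coeff_smul, coeff_zero] at hcoeff
    rw [Finset.sum_eq_single j] at hcoeff
    · obtain ⟨hm, hdeg, -⟩ := fj_facts d i j hi (hb j)
      rw [← hdeg, hm.coeff_natDegree, smul_eq_mul, mul_one] at hcoeff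
      exact hcoeff
    · intro k _ hkj
      rcases lt_or_gt_of_ne (fun h : (k:ℕ) = (j:ℕ) => hkj (Fin.ext h)) with hlt | hgt
      · rw [ihn (k:ℕ) (by omega) k rfl, zero_smul]
      · obtain ⟨-, hdeg, -⟩ := fj_facts d i k hi (hb k)
        rw [coeff_eq_zero_of_natDegree_lt, smul_zero]
        rw [hdeg]
        have := hb j; have := hb k
        omega
    · simp

lemma span_le (d i : ℕ) (hi : 1 ≤ i) :
    (Submodule.span ℚ (Set.range (fun j : Fin ((d + 1) / 2 + 1) =>
        (X : ℚ[X]) ^ (j : ℕ) * Ppoly ((d : ℤ) - 2 * (j : ℕ)) i)) : Set ℚ[X]) ⊆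
      {h : ℚ[X] | h.degree ≤ (d + 1 : ℕ) ∧ h.reflect (d + 1) = h} := by
  intro h hh
  induction hh using Submodule.span_induction with
  | mem x hx =>
    obtain ⟨j, rfl⟩ := hx
    have hb : 2 * (j : ℕ) ≤ d + 1 := by have := j.isLt; omega
    obtain ⟨hm, hdeg, hrefl⟩ := fj_facts d i j hi hb
    constructor
    · rw [← natDegree_le_iff_degree_le, hdeg]; omega
    · exact hrefl
  | zero => exact ⟨by simp, by simp⟩
  | add x y _ _ hx hy =>
    exact ⟨le_trans (degree_add_le x y) (max_le hx.1 hy.1),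
      by rw [reflect_add, hx.2, hy.2]⟩
  | smul a x _ hx =>
    refine ⟨le_trans (degree_smul_le a x) hx.1, ?_⟩
    rw [smul_eq_C_mul, reflect_C_mul, hx.2]

noncomputable def fam (d i : ℕ) : Fin ((d + 1) / 2 + 1) → ℚ[X] :=
  fun j => (X : ℚ[X]) ^ (j : ℕ) * Ppoly ((d : ℤ) - 2 * (j : ℕ)) i

lemma span_ge (d : ℕ) : ∀ i : ℕ, 1 ≤ i → ∀ h : ℚ[X],
    h.degree ≤ (d + 1 : ℕ) → h.reflect (d + 1) = h →
    h ∈ Submodule.span ℚ (Set.range (fam d i)) := by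
  induction d using Nat.strong_induction_on with
  | _ d ihd =>
    intro i hi h hdeg hrefl
    -- subtract leading coefficient times f_0
    set c := h.coeff (d + 1) with hc
    obtain ⟨hm0, hdeg0, hrefl0⟩ := fj_facts d i 0 hi (by omega)
    set f0 : ℚ[X] := (X:ℚ[X]) ^ (0:ℕ) * Ppoly ((d:ℤ) - 2 * ((0:ℕ):ℤ)) i with hf0
    have hf0mem : f0 ∈ Submodule.span ℚ (Set.range (fam d i)) :=
      Submodule.subset_span ⟨⟨0, by omega⟩, rfl⟩
    set h' : ℚ[X] := h - C c * f0 with hh'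
    have hsplit : h = C c * f0 + h' := by ring
    -- key properties of h'
    have hdeg' : h'.degree ≤ (d + 1 : ℕ) := by
      refine le_trans (degree_sub_le _ _) (max_le hdeg ?_)
      refine le_trans (degree_mul_le _ _) ?_
      have : f0.degree ≤ (d + 1 : ℕ) := by
        rw [← natDegree_le_iff_degree_le, hdeg0]; omega
      calc (C c).degree + f0.degree ≤ 0 + (d + 1 : ℕ) :=
            add_le_add degree_C_le this
        _ = (d + 1 : ℕ) := by simp
    have htop : h'.coeff (d + 1) = 0 := by
      have : f0.coeff (d + 1) = 1 := by
        have := hm0.coeff_natDegree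
        rwa [hdeg0, Nat.sub_zero] at this
      simp [hh', this, ← hc]
    have hrefl' : h'.reflect (d + 1) = h' := by
      rw [hh', reflect_sub, hrefl, reflect_C_mul, hrefl0]
    have hbot : h'.coeff 0 = 0 := by
      have := congrArg (fun p : ℚ[X] => p.coeff (d + 1)) hrefl'
      simp only [coeff_reflect] at this
      rw [revAt_le (le_refl (d+1)), Nat.sub_self] at this
      rw [this]; exact htop
    have hdegd : h'.degree ≤ (d : ℕ) := by
      rw [degree_le_iff_coeff_zero] at hdeg' ⊢
      intro m hm
      have hm' : d < m := by exact_mod_cast hm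
      rcases eq_or_lt_of_le (Nat.succ_le_of_lt hm') with he | hl
      · rw [← he]; exact htop
      · exact hdeg' m (by exact_mod_cast hl)
    set g : ℚ[X] := h'.divX with hg
    have hXg : h' = X * g := by
      conv_lhs => rw [← X_mul_divX_add h']
      rw [hbot, map_zero, add_zero]
    rcases Nat.eq_zero_or_pos d with hd0 | hd1
    · -- d = 0 : h' must vanish
      subst hd0
      have hz : h' = 0 := by
        have h0 : h'.degree ≤ 0 := by simpa using hdegd
        rw [eq_C_of_degree_le_zero h0, hbot, map_zero]
      rw [hsplit, hz, add_zero, ← smul_eq_C_mul]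
      exact Submodule.smul_mem _ c hf0mem
    · -- d ≥ 1
      have hgdeg : g.degree ≤ ((d - 1 : ℕ) : WithBot ℕ) := by
        rw [degree_le_iff_coeff_zero]
        intro m hm
        have hm' : d - 1 < m := by exact_mod_cast hm
        rw [hg, coeff_divX]
        rw [degree_le_iff_coeff_zero] at hdegd
        exact hdegd (m + 1) (by exact_mod_cast (show d < m + 1 by omega))
      have hgnat : g.natDegree ≤ d - 1 := natDegree_le_iff_degree_le.mpr hgdeg
      have hgrefl : reflect (d - 1) g = g := by
        have hr := hrefl'
        rw [hXg, show d + 1 = 2 + (d - 1) by omega,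
          reflect_mul X g (show X.natDegree ≤ 2 by rw [natDegree_X]; omega) hgnat] at hr
        rw [show ((X : ℚ[X]).reflect 2) = X by
          rw [← pow_one (X : ℚ[X]), reflect_monomial, revAt_le (by omega)]] at hr
        exact mul_left_cancel₀ X_ne_zero hr
      rcases Nat.lt_or_ge d 2 with hd1' | hd2
      · -- d = 1
        have hd : d = 1 := by omega
        subst hd
        have hgc : g = C (g.coeff 0) := eq_C_of_degree_le_zero (by simpa using hgdeg)
        have hmem' : h' ∈ Submodule.span ℚ (Set.range (fam 1 i)) := by
          rw [hXg, hgc]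
          have he1 : (X : ℚ[X]) * C (g.coeff 0) = (g.coeff 0) • fam 1 i ⟨1, by norm_num⟩ := by
            show (X : ℚ[X]) * C (g.coeff 0)
              = (g.coeff 0) • ((X : ℚ[X]) ^ (1:ℕ) * Ppoly (((1:ℕ):ℤ) - 2 * ((1:ℕ):ℤ)) i)
            rw [Ppoly_neg (by norm_num) i, mul_one, smul_eq_C_mul, pow_one, mul_comm]
          rw [he1]
          exact Submodule.smul_mem _ _ (Submodule.subset_span ⟨_, rfl⟩)
        rw [hsplit]
        exact add_mem (by rw [← smul_eq_C_mul]; exact Submodule.smul_mem _ c hf0mem) hmem'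
      · -- d ≥ 2 : use the induction hypothesis at d - 2
        have hgmem : g ∈ Submodule.span ℚ (Set.range (fam (d - 2) i)) := by
          apply ihd (d - 2) (by omega) i hi g
          · rw [show d - 2 + 1 = d - 1 by omega]; exact hgdeg
          · rw [show d - 2 + 1 = d - 1 by omega]; exact hgrefl
        rw [hsplit]
        refine add_mem (by rw [← smul_eq_C_mul]; exact Submodule.smul_mem _ c hf0mem) ?_
        rw [hXg]
        clear_value g
        clear hXg hgrefl hgnat hgdeg hdegd hbot hrefl' htop hdeg' hsplit hh' hf0mem hrefl hdeg hg
        induction hgmem using Submodule.span_induction with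
        | mem x hx =>
          obtain ⟨j, rfl⟩ := hx
          apply Submodule.subset_span
          have hjb : (j : ℕ) + 1 < (d + 1) / 2 + 1 := by have := j.isLt; omega
          refine ⟨⟨(j : ℕ) + 1, hjb⟩, ?_⟩
          show (X : ℚ[X]) ^ ((j:ℕ) + 1) * Ppoly ((d : ℤ) - 2 * (((j:ℕ) + 1 : ℕ) : ℤ)) i
            = X * fam (d - 2) i j
          show _ = X * ((X : ℚ[X]) ^ (j:ℕ) * Ppoly (((d - 2 : ℕ) : ℤ) - 2 * ((j:ℕ) : ℤ)) i)
          have harg : ((d - 2 : ℕ) : ℤ) - 2 * ((j:ℕ) : ℤ) = (d : ℤ) - 2 * (((j:ℕ) + 1 : ℕ) : ℤ) := by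
            push_cast; omega
          rw [harg, ← mul_assoc, ← pow_succ']
        | zero => simp
        | add x y _ _ hx hy => rw [mul_add]; exact add_mem hx hy
        | smul a x _ hx => rw [mul_smul_comm]; exact Submodule.smul_mem _ a hx

/-- the family `B_{d,i} = (t^j P_{d-2j,i})_{0 ≤ j ≤ ⌊(d+1)/2⌋}` in `ℚ[t]` is
linearly independent over `ℚ`, and its span is exactly the set of polynomials of degree at
most `d + 1` that are symmetric with axis of symmetry at degree `(d+1)/2`, i.e. whose
reversal with respect to degree `d + 1` (`Polynomial.reflect (d+1)`) equals themselves. -/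
theorem Ppoly_basis_symmetric (d i : ℕ) (hi : 1 ≤ i) :
    LinearIndependent ℚ
      (fun j : Fin ((d + 1) / 2 + 1) =>
        (X : ℚ[X]) ^ (j : ℕ) * Ppoly ((d : ℤ) - 2 * (j : ℕ)) i) ∧
    (Submodule.span ℚ (Set.range (fun j : Fin ((d + 1) / 2 + 1) =>
        (X : ℚ[X]) ^ (j : ℕ) * Ppoly ((d : ℤ) - 2 * (j : ℕ)) i)) : Set ℚ[X]) =
      {h : ℚ[X] | h.degree ≤ (d + 1 : ℕ) ∧ h.reflect (d + 1) = h} := by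
  refine ⟨fam_li d i hi, ?_⟩
  apply Set.Subset.antisymm
  · exact span_le d i hi
  · intro h hh
    exact span_ge d i hi h hh.1 hh.2
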